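/- Let f be a positive reduced ternary quadratic polynomial, let μ₁ ≤ μ₂ ≤ μ₃ be the successive minima of its quadratic part, and let a = (a₁,a₂,a₃) ∈ ℤ³. Then: (a) if |a₃| ≥ 9 then f(a) ≥ (3/2)μ₃; (b) if |a₃| ≤ 8 and |a₂| ≥ 22 then f(a) ≥ (7/2)μ₂; (c) if |a₃| ≤ 8 and |a₂| ≤ 21 then f(a) ≥ μ₁(a₁² − 30|a₁|); (d) if |a₃| ≤ 8, |a₂| ≤ 21 and |a₁| ≥ 31 then f(a) ≥ 31μ₁. -/

import Mathlib

noncomputable section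

open Matrix

/-- A ternary quadratic polynomial over `ℚ`:
`f(x) = Q(x) + ℓ(x) + m` where `Q(x) = xᵀAx` for a symmetric matrix `A`,
`ℓ(x) = b ⬝ x` is a linear form and `m` is a constant. -/
structure QuadPoly3 where
  A : Matrix (Fin 3) (Fin 3) ℚ
  hA : A.IsSymm
  b : Fin 3 → ℚ
  m : ℚ

namespace QuadPoly3

/-- Evaluation of the quadratic polynomial at a rational point. -/
def eval (f : QuadPoly3) (x : Fin 3 → ℚ) : ℚ :=
  x ⬝ᵥ f.A.mulVec x + f.b ⬝ᵥ x + f.m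

/-- The quadratic part evaluated at a rational point. -/
def evalQ (f : QuadPoly3) (x : Fin 3 → ℚ) : ℚ := x ⬝ᵥ f.A.mulVec x

/-- `f` is positive: its quadratic part is positive definite and the minimum of `f`
on `ℤ³` is nonnegative. -/
def Positive (f : QuadPoly3) : Prop :=
  f.A.PosDef ∧ ∀ x : Fin 3 → ℤ, 0 ≤ f.eval (fun i => (x i : ℚ))

/-- The quadratic part of `f` is Minkowski reduced: for each `i`, `Q(eᵢ) ≤ Q(x)` for every
integer vector `x` whose coordinates `xᵢ, …, xₙ` have gcd `1`. -/
def MinkowskiReducedQ (f : QuadPoly3) : Prop :=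
  ∀ (i : Fin 3) (x : Fin 3 → ℤ),
    (Finset.univ.filter fun j => i ≤ j).gcd x = 1 →
      f.A i i ≤ f.evalQ (fun j => (x j : ℚ))

/-- `f` is (Minkowski) reduced: its quadratic part is Minkowski reduced and `f` attains its
minimum over `ℤ³` at the zero vector.  For such `f` the successive minima of the quadratic
part are the diagonal entries `μ₁ = A 0 0 ≤ μ₂ = A 1 1 ≤ μ₃ = A 2 2`. -/
def Reduced (f : QuadPoly3) : Prop :=
  f.MinkowskiReducedQ ∧ ∀ x : Fin 3 → ℤ, f.eval 0 ≤ f.eval (fun i => (x i : ℚ))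

end QuadPoly3

private lemma round_sq (t : ℚ) : ∃ n : ℤ, ((n:ℚ)+t)^2 ≤ 1/4 := by
  refine ⟨-round t, ?_⟩
  have h := abs_le.mp (abs_sub_round t)
  push_cast
  nlinarith [h.1, h.2]

private lemma round_trick (c t : ℚ) : ∃ n : ℤ, -(1/4) ≤ c*((n:ℚ)+t) - ((n:ℚ)+t)^2 := by
  refine ⟨round (c/2 - t), ?_⟩
  have h := abs_le.mp (abs_sub_round (c/2 - t))
  nlinarith [h.1, h.2, sq_nonneg c]

private lemma scalar_basic (α β γ p q r : ℚ)
    (hα : 0 < α) (hαβ : α ≤ β) (hβγ : β ≤ γ)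
    (hp : |2*p| ≤ α) (hq : |2*q| ≤ α) (hr : |2*r| ≤ β) :
    0 < β ∧ 0 < γ ∧ |p| ≤ α/2 ∧ |q| ≤ α/2 ∧ |r| ≤ β/2 ∧
      p^2/α ≤ α/4 ∧ 0 < α*β - p^2 ∧ |α*r - p*q| ≤ α*β - p^2 := by
  have hβpos : 0 < β := lt_of_lt_of_le hα hαβ
  have hγpos : 0 < γ := lt_of_lt_of_le hβpos hβγ
  have e2 : ∀ z : ℚ, |2*z| = 2*|z| := by intro z; rw [abs_mul]; norm_num
  have Hp : |p| ≤ α/2 := by rw [e2] at hp; linarith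
  have Hq : |q| ≤ α/2 := by rw [e2] at hq; linarith
  have Hr : |r| ≤ β/2 := by rw [e2] at hr; linarith
  have hp2 : p^2/α ≤ α/4 := by
    rw [div_le_iff₀ hα]
    nlinarith [abs_nonneg p, sq_abs p, Hp]
  have hD : 0 < α*β - p^2 := by nlinarith [sq_abs p, Hp, abs_nonneg p]
  have hN : |α*r - p*q| ≤ α*β - p^2 := by
    have h1 : |α*r| ≤ α*(β/2) := by
      rw [abs_mul, abs_of_pos hα]
      exact mul_le_mul_of_nonneg_left Hr hα.le
    have h2 : |p*q| ≤ (α/2)*(α/2) := by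
      rw [abs_mul]
      exact mul_le_mul Hp Hq (abs_nonneg q) (by linarith)
    have h3 := (abs_sub (α*r) (p*q))
    have h4 : p^2 ≤ (α/2)*(α/2) := by nlinarith [sq_abs p, Hp, abs_nonneg p]
    nlinarith [h3]
  exact ⟨hβpos, hγpos, Hp, Hq, Hr, hp2, hD, hN⟩

private lemma scalarA (α β γ p q r F a0 a1 a2 : ℚ)
    (hα : 0 < α) (hαβ : α ≤ β) (hβγ : β ≤ γ)
    (hp : |2*p| ≤ α) (hq : |2*q| ≤ α) (hr : |2*r| ≤ β)
    (hint : ∀ k l : ℤ, γ ≤ α*(k:ℚ)^2 + β*(l:ℚ)^2 + γ + 2*p*(k:ℚ)*(l:ℚ)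
      + 2*q*(k:ℚ) + 2*r*(l:ℚ))
    (hkey : ∀ n0 n1 n2 : ℤ,
      2*(α*a0*(n0:ℚ) + β*a1*(n1:ℚ) + γ*a2*(n2:ℚ) + p*(a0*(n1:ℚ) + a1*(n0:ℚ))
        + q*(a0*(n2:ℚ) + a2*(n0:ℚ)) + r*(a1*(n2:ℚ) + a2*(n1:ℚ)))
      - 2*(α*(n0:ℚ)^2 + β*(n1:ℚ)^2 + γ*(n2:ℚ)^2 + 2*p*(n0:ℚ)*(n1:ℚ)
        + 2*q*(n0:ℚ)*(n2:ℚ) + 2*r*(n1:ℚ)*(n2:ℚ)) ≤ F)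
    (ha2 : 9 ≤ a2) : 3/2*γ ≤ F := by
  obtain ⟨hβpos, hγpos, Hp, Hq, Hr, hp2, hD, hN⟩ :=
    scalar_basic α β γ p q r hα hαβ hβγ hp hq hr
  have hαne : α ≠ 0 := ne_of_gt hα
  have hDne : α*β - p^2 ≠ 0 := ne_of_gt hD
  have hB'1 : 3/4*β ≤ β - p^2/α := by linarith
  have hB'2 : β - p^2/α ≤ β := by
    have : 0 ≤ p^2/α := div_nonneg (sq_nonneg p) hα.le
    linarith
  have hB'pos : 0 < β - p^2/α := by linarith
  have hR : |(α*r - p*q)/(α*β - p^2)| ≤ 1 := by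
    rw [abs_div, abs_of_pos hD, div_le_one hD]
    exact hN
  -- the bound γ'' ≥ γ/2
  have hG : γ/2 ≤ γ - q^2/α - (α*r - p*q)^2/(α*(α*β - p^2)) := by
    obtain ⟨l0, hl0⟩ := round_sq ((α*r - p*q)/(α*β - p^2))
    obtain ⟨k0, hk0⟩ := round_sq (p/α*(l0:ℚ) + q/α)
    have hid : α*((k0:ℚ) + (p/α*(l0:ℚ) + q/α))^2
        + (β - p^2/α)*((l0:ℚ) + (α*r - p*q)/(α*β - p^2))^2
        + (γ - q^2/α - (α*r - p*q)^2/(α*(α*β - p^2)))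
        = α*(k0:ℚ)^2 + β*(l0:ℚ)^2 + γ + 2*p*(k0:ℚ)*(l0:ℚ) + 2*q*(k0:ℚ) + 2*r*(l0:ℚ) := by
      field_simp
      ring
    have h3 := hint k0 l0
    have t1 : α*((k0:ℚ) + (p/α*(l0:ℚ) + q/α))^2 ≤ α*(1/4) :=
      mul_le_mul_of_nonneg_left hk0 hα.le
    have t2 : (β - p^2/α)*((l0:ℚ) + (α*r - p*q)/(α*β - p^2))^2 ≤ (β - p^2/α)*(1/4) :=
      mul_le_mul_of_nonneg_left hl0 hB'pos.le
    have hαγ : α ≤ γ := le_trans hαβ hβγ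
    linarith [hid ▸ h3]
  -- main argument
  obtain ⟨l, hl⟩ := round_trick (a1 + ((α*r - p*q)/(α*β - p^2))*a2) ((α*r - p*q)/(α*β - p^2))
  obtain ⟨k, hk⟩ := round_trick (a0 + p/α*a1 + q/α*a2) (p/α*(l:ℚ) + q/α)
  have hF : 2*α*((a0 + p/α*a1 + q/α*a2)*((k:ℚ) + (p/α*(l:ℚ) + q/α))
        - ((k:ℚ) + (p/α*(l:ℚ) + q/α))^2)
      + 2*(β - p^2/α)*((a1 + ((α*r - p*q)/(α*β - p^2))*a2)*((l:ℚ) + (α*r - p*q)/(α*β - p^2))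
        - ((l:ℚ) + (α*r - p*q)/(α*β - p^2))^2)
      + 2*(γ - q^2/α - (α*r - p*q)^2/(α*(α*β - p^2)))*(a2 - 1) ≤ F := by
    refine le_trans (le_of_eq ?_) (hkey k l 1)
    push_cast
    field_simp
    ring
  have t1 := mul_le_mul_of_nonneg_left hk (by linarith : (0:ℚ) ≤ 2*α)
  have t2 := mul_le_mul_of_nonneg_left hl (by linarith : (0:ℚ) ≤ 2*(β - p^2/α))
  have h8 : (8:ℚ) ≤ a2 - 1 := by linarith
  have t3 := mul_le_mul_of_nonneg_left h8
    (by linarith : (0:ℚ) ≤ 2*(γ - q^2/α - (α*r - p*q)^2/(α*(α*β - p^2))))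
  have hαγ : α ≤ γ := le_trans hαβ hβγ
  linarith [t1, t2, t3, hF, hG, hB'1, hB'2]

private lemma scalarB (α β γ p q r F a0 a1 a2 : ℚ)
    (hα : 0 < α) (hαβ : α ≤ β) (hβγ : β ≤ γ)
    (hp : |2*p| ≤ α) (hq : |2*q| ≤ α) (hr : |2*r| ≤ β)
    (hkey : ∀ n0 n1 n2 : ℤ,
      2*(α*a0*(n0:ℚ) + β*a1*(n1:ℚ) + γ*a2*(n2:ℚ) + p*(a0*(n1:ℚ) + a1*(n0:ℚ))
        + q*(a0*(n2:ℚ) + a2*(n0:ℚ)) + r*(a1*(n2:ℚ) + a2*(n1:ℚ)))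
      - 2*(α*(n0:ℚ)^2 + β*(n1:ℚ)^2 + γ*(n2:ℚ)^2 + 2*p*(n0:ℚ)*(n1:ℚ)
        + 2*q*(n0:ℚ)*(n2:ℚ) + 2*r*(n1:ℚ)*(n2:ℚ)) ≤ F)
    (ha2 : |a2| ≤ 8) (ha1 : 22 ≤ a1) : 7/2*β ≤ F := by
  obtain ⟨hβpos, hγpos, Hp, Hq, Hr, hp2, hD, hN⟩ :=
    scalar_basic α β γ p q r hα hαβ hβγ hp hq hr
  have hαne : α ≠ 0 := ne_of_gt hα
  have hB'1 : 3/4*β ≤ β - p^2/α := by linarith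
  have hB'pos : 0 < β - p^2/α := by linarith
  have hra2 : -8 ≤ ((α*r - p*q)/(α*β - p^2))*a2 := by
    have h : |((α*r - p*q)/(α*β - p^2))*a2| ≤ 1*8 := by
      rw [abs_mul]
      refine mul_le_mul ?_ ha2 (abs_nonneg a2) one_pos.le
      rw [abs_div, abs_of_pos hD, div_le_one hD]
      exact hN
    have h2 := neg_abs_le (((α*r - p*q)/(α*β - p^2))*a2)
    linarith
  obtain ⟨k, hk⟩ := round_trick (a0 + p/α*a1 + q/α*a2) (p/α)
  have hF : 2*α*((a0 + p/α*a1 + q/α*a2)*((k:ℚ) + p/α) - ((k:ℚ) + p/α)^2)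
      + 2*(β - p^2/α)*((a1 + ((α*r - p*q)/(α*β - p^2))*a2) - 1) ≤ F := by
    refine le_trans (le_of_eq ?_) (hkey k 1 0)
    push_cast
    field_simp
    ring
  have t1 := mul_le_mul_of_nonneg_left hk (by linarith : (0:ℚ) ≤ 2*α)
  have h13 : (13:ℚ) ≤ (a1 + ((α*r - p*q)/(α*β - p^2))*a2) - 1 := by linarith
  have t2 := mul_le_mul_of_nonneg_left h13 (by linarith : (0:ℚ) ≤ 2*(β - p^2/α))
  linarith [t1, t2, hF, hB'1]

private lemma scalarC (α p q b0 F a0 a1 a2 : ℚ)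
    (hα : 0 < α) (hp : |2*p| ≤ α) (hq : |2*q| ≤ α) (hb0 : |b0| ≤ α)
    (hkeyc : α*a0^2 + 2*a0*(p*a1 + q*a2) + b0*a0 ≤ F)
    (ha1 : |a1| ≤ 21) (ha2 : |a2| ≤ 8) : α*(a0^2 - 30*|a0|) ≤ F := by
  have e2 : ∀ z : ℚ, |2*z| = 2*|z| := by intro z; rw [abs_mul]; norm_num
  have Hp : |p| ≤ α/2 := by rw [e2] at hp; linarith
  have Hq : |q| ≤ α/2 := by rw [e2] at hq; linarith
  have i1 : |p*a1| ≤ (α/2)*21 := by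
    rw [abs_mul]; exact mul_le_mul Hp ha1 (abs_nonneg a1) (by linarith)
  have i2 : |q*a2| ≤ (α/2)*8 := by
    rw [abs_mul]; exact mul_le_mul Hq ha2 (abs_nonneg a2) (by linarith)
  have e1 : |p*a1 + q*a2| ≤ (29/2)*α := le_trans (abs_add_le _ _) (by linarith)
  have e3 : |2*a0*(p*a1 + q*a2)| ≤ (2*|a0|)*((29/2)*α) := by
    rw [abs_mul, abs_mul, abs_two]
    exact mul_le_mul_of_nonneg_left e1 (by positivity)
  have e4 : |b0*a0| ≤ α*|a0| := by
    rw [abs_mul]; exact mul_le_mul_of_nonneg_right hb0 (abs_nonneg a0)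
  have n3 := neg_abs_le (2*a0*(p*a1 + q*a2))
  have n4 := neg_abs_le (b0*a0)
  nlinarith [hkeyc, e3, e4, n3, n4]

theorem stmt_4 (f : QuadPoly3) (hpos : f.Positive) (hred : f.Reduced) (a : Fin 3 → ℤ) :
    (9 ≤ |a 2| → (3 / 2 : ℚ) * f.A 2 2 ≤ f.eval (fun i => (a i : ℚ))) ∧
    (|a 2| ≤ 8 → 22 ≤ |a 1| → (7 / 2 : ℚ) * f.A 1 1 ≤ f.eval (fun i => (a i : ℚ))) ∧
    (|a 2| ≤ 8 → |a 1| ≤ 21 →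
      f.A 0 0 * (((a 0) ^ 2 - 30 * |a 0| : ℤ) : ℚ) ≤ f.eval (fun i => (a i : ℚ))) ∧
    (|a 2| ≤ 8 → |a 1| ≤ 21 → 31 ≤ |a 0| →
      (31 : ℚ) * f.A 0 0 ≤ f.eval (fun i => (a i : ℚ))) := by
  obtain ⟨hpd, hnn⟩ := hpos
  obtain ⟨hmk, hmin⟩ := hred
  have h10 : f.A 1 0 = f.A 0 1 := (f.hA.apply 1 0).symm
  have h20 : f.A 2 0 = f.A 0 2 := (f.hA.apply 2 0).symm
  have h21 : f.A 2 1 = f.A 1 2 := (f.hA.apply 2 1).symm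
  have heval : ∀ x : Fin 3 → ℚ, f.eval x =
      f.A 0 0*(x 0)^2 + f.A 1 1*(x 1)^2 + f.A 2 2*(x 2)^2
      + 2*f.A 0 1*(x 0)*(x 1) + 2*f.A 0 2*(x 0)*(x 2) + 2*f.A 1 2*(x 1)*(x 2)
      + f.b 0*(x 0) + f.b 1*(x 1) + f.b 2*(x 2) + f.m := by
    intro x
    simp only [QuadPoly3.eval, Matrix.mulVec, dotProduct, Fin.sum_univ_three]
    rw [h10, h20, h21]; ring
  have hQx : ∀ x : Fin 3 → ℚ, f.evalQ x =
      f.A 0 0*(x 0)^2 + f.A 1 1*(x 1)^2 + f.A 2 2*(x 2)^2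
      + 2*f.A 0 1*(x 0)*(x 1) + 2*f.A 0 2*(x 0)*(x 2) + 2*f.A 1 2*(x 1)*(x 2) := by
    intro x
    simp only [QuadPoly3.evalQ, Matrix.mulVec, dotProduct, Fin.sum_univ_three]
    rw [h10, h20, h21]; ring
  have hα : 0 < f.A 0 0 := by
    exact hpd.diag_pos
  have hm : 0 ≤ f.m := by
    have h := hnn 0
    have h0 : (fun i => (((0 : Fin 3 → ℤ) i : ℚ))) = (fun _ : Fin 3 => (0:ℚ)) := by
      funext i; simp
    rw [h0, heval] at h
    norm_num at h
    exact h
  have hminm : ∀ x : Fin 3 → ℤ, f.m ≤ f.eval (fun i => (x i : ℚ)) := by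
    intro x
    have h := hmin x
    have h0 : f.eval 0 = f.m := by rw [heval]; norm_num
    rw [h0] at h
    exact h
  -- reduction facts
  have hαβ : f.A 0 0 ≤ f.A 1 1 := by
    have h := hmk 0 ![0,1,0] (by decide)
    rw [hQx] at h
    norm_num [Matrix.cons_val_two, Matrix.tail_cons, Matrix.head_cons] at h
    exact h
  have hβγ : f.A 1 1 ≤ f.A 2 2 := by
    have h := hmk 1 ![0,0,1] (by decide)
    rw [hQx] at h
    norm_num [Matrix.cons_val_two, Matrix.tail_cons, Matrix.head_cons] at h
    exact h
  have hp : |2*f.A 0 1| ≤ f.A 0 0 := by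
    have h1 := hmk 1 ![1,1,0] (by decide)
    have h2 := hmk 1 ![-1,1,0] (by decide)
    rw [hQx] at h1 h2
    norm_num [Matrix.cons_val_two, Matrix.tail_cons, Matrix.head_cons] at h1 h2
    rw [abs_le]
    constructor <;> linarith
  have hq : |2*f.A 0 2| ≤ f.A 0 0 := by
    have h1 := hmk 2 ![1,0,1] (by decide)
    have h2 := hmk 2 ![-1,0,1] (by decide)
    rw [hQx] at h1 h2
    norm_num [Matrix.cons_val_two, Matrix.tail_cons, Matrix.head_cons] at h1 h2
    rw [abs_le]
    constructor <;> linarith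
  have hr : |2*f.A 1 2| ≤ f.A 1 1 := by
    have h1 := hmk 2 ![0,1,1] (by decide)
    have h2 := hmk 2 ![0,-1,1] (by decide)
    rw [hQx] at h1 h2
    norm_num [Matrix.cons_val_two, Matrix.tail_cons, Matrix.head_cons] at h1 h2
    rw [abs_le]
    constructor <;> linarith
  have hint : ∀ k l : ℤ, f.A 2 2 ≤ f.A 0 0*(k:ℚ)^2 + f.A 1 1*(l:ℚ)^2 + f.A 2 2
      + 2*f.A 0 1*(k:ℚ)*(l:ℚ) + 2*f.A 0 2*(k:ℚ) + 2*f.A 1 2*(l:ℚ) := by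
    intro k l
    have hg : (Finset.univ.filter fun j => (2:Fin 3) ≤ j).gcd ![k,l,1] = 1 := by
      rw [show (Finset.univ.filter fun j => (2:Fin 3) ≤ j) = {2} from by decide,
        Finset.gcd_singleton]
      simp
    have h := hmk 2 ![k,l,1] hg
    rw [hQx] at h
    simp at h
    linarith
  have hb0 : |f.b 0| ≤ f.A 0 0 := by
    have h1 := hminm ![1,0,0]
    have h2 := hminm ![-1,0,0]
    rw [heval] at h1 h2
    norm_num [Matrix.cons_val_two, Matrix.tail_cons, Matrix.head_cons] at h1 h2
    rw [abs_le]
    constructor <;> linarith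
  -- master inequality
  have hkey : ∀ n0 n1 n2 : ℤ,
      2*(f.A 0 0*(a 0:ℚ)*(n0:ℚ) + f.A 1 1*(a 1:ℚ)*(n1:ℚ) + f.A 2 2*(a 2:ℚ)*(n2:ℚ)
        + f.A 0 1*((a 0:ℚ)*(n1:ℚ) + (a 1:ℚ)*(n0:ℚ))
        + f.A 0 2*((a 0:ℚ)*(n2:ℚ) + (a 2:ℚ)*(n0:ℚ))
        + f.A 1 2*((a 1:ℚ)*(n2:ℚ) + (a 2:ℚ)*(n1:ℚ)))
      - 2*(f.A 0 0*(n0:ℚ)^2 + f.A 1 1*(n1:ℚ)^2 + f.A 2 2*(n2:ℚ)^2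
        + 2*f.A 0 1*(n0:ℚ)*(n1:ℚ) + 2*f.A 0 2*(n0:ℚ)*(n2:ℚ)
        + 2*f.A 1 2*(n1:ℚ)*(n2:ℚ)) ≤ f.eval (fun i => (a i : ℚ)) := by
    intro n0 n1 n2
    have h1 := hminm (fun i => a i - ![n0,n1,n2] i)
    have h2 := hminm ![n0,n1,n2]
    rw [heval] at h1 h2
    rw [heval]
    simp only [Matrix.cons_val_zero, Matrix.cons_val_one, Matrix.head_cons,
      Matrix.cons_val_two, Matrix.tail_cons] at h1 h2
    push_cast at h1 h2
    linarith [h1, h2, hm]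
  have hkeyn : ∀ n0 n1 n2 : ℤ,
      2*(f.A 0 0*(-(a 0:ℚ))*(n0:ℚ) + f.A 1 1*(-(a 1:ℚ))*(n1:ℚ) + f.A 2 2*(-(a 2:ℚ))*(n2:ℚ)
        + f.A 0 1*((-(a 0:ℚ))*(n1:ℚ) + (-(a 1:ℚ))*(n0:ℚ))
        + f.A 0 2*((-(a 0:ℚ))*(n2:ℚ) + (-(a 2:ℚ))*(n0:ℚ))
        + f.A 1 2*((-(a 1:ℚ))*(n2:ℚ) + (-(a 2:ℚ))*(n1:ℚ)))
      - 2*(f.A 0 0*(n0:ℚ)^2 + f.A 1 1*(n1:ℚ)^2 + f.A 2 2*(n2:ℚ)^2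
        + 2*f.A 0 1*(n0:ℚ)*(n1:ℚ) + 2*f.A 0 2*(n0:ℚ)*(n2:ℚ)
        + 2*f.A 1 2*(n1:ℚ)*(n2:ℚ)) ≤ f.eval (fun i => (a i : ℚ)) := by
    intro n0 n1 n2
    have h := hkey (-n0) (-n1) (-n2)
    push_cast at h
    linarith [h]
  refine ⟨?_, ?_, ?_, ?_⟩
  · -- part (a)
    intro h9
    rcases le_or_gt 0 (a 2) with hs | hs
    · have ha2 : (9:ℚ) ≤ (a 2 : ℚ) := by
        have : (9:ℤ) ≤ a 2 := by rwa [abs_of_nonneg hs] at h9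
        exact_mod_cast this
      exact scalarA (f.A 0 0) (f.A 1 1) (f.A 2 2) (f.A 0 1) (f.A 0 2) (f.A 1 2) _
        (a 0:ℚ) (a 1:ℚ) (a 2:ℚ) hα hαβ hβγ hp hq hr hint hkey ha2
    · have ha2 : (9:ℚ) ≤ -(a 2 : ℚ) := by
        have : (9:ℤ) ≤ -(a 2) := by rwa [abs_of_neg hs] at h9
        exact_mod_cast this
      exact scalarA (f.A 0 0) (f.A 1 1) (f.A 2 2) (f.A 0 1) (f.A 0 2) (f.A 1 2) _
        (-(a 0:ℚ)) (-(a 1:ℚ)) (-(a 2:ℚ)) hα hαβ hβγ hp hq hr hint hkeyn ha2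
  · -- part (b)
    intro h8 h22
    have ha2 : |(a 2 : ℚ)| ≤ 8 := by exact_mod_cast h8
    rcases le_or_gt 0 (a 1) with hs | hs
    · have ha1 : (22:ℚ) ≤ (a 1 : ℚ) := by
        have : (22:ℤ) ≤ a 1 := by rwa [abs_of_nonneg hs] at h22
        exact_mod_cast this
      exact scalarB (f.A 0 0) (f.A 1 1) (f.A 2 2) (f.A 0 1) (f.A 0 2) (f.A 1 2) _
        (a 0:ℚ) (a 1:ℚ) (a 2:ℚ) hα hαβ hβγ hp hq hr hkey ha2 ha1
    · have ha1 : (22:ℚ) ≤ -(a 1 : ℚ) := by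
        have : (22:ℤ) ≤ -(a 1) := by rwa [abs_of_neg hs] at h22
        exact_mod_cast this
      have ha2' : |(-(a 2:ℚ))| ≤ 8 := by rwa [abs_neg]
      exact scalarB (f.A 0 0) (f.A 1 1) (f.A 2 2) (f.A 0 1) (f.A 0 2) (f.A 1 2) _
        (-(a 0:ℚ)) (-(a 1:ℚ)) (-(a 2:ℚ)) hα hαβ hβγ hp hq hr hkeyn ha2' ha1
  · -- part (c)
    intro h8 h21'
    have ha1 : |(a 1 : ℚ)| ≤ 21 := by exact_mod_cast h21'
    have ha2 : |(a 2 : ℚ)| ≤ 8 := by exact_mod_cast h8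
    have hkeyc : f.A 0 0*(a 0:ℚ)^2 + 2*(a 0:ℚ)*(f.A 0 1*(a 1:ℚ) + f.A 0 2*(a 2:ℚ))
        + f.b 0*(a 0:ℚ) ≤ f.eval (fun i => (a i : ℚ)) := by
      have h1 := hminm ![0, a 1, a 2]
      rw [heval] at h1
      rw [heval]
      simp only [Matrix.cons_val_zero, Matrix.cons_val_one, Matrix.head_cons,
        Matrix.cons_val_two, Matrix.tail_cons] at h1
      push_cast at h1
      linarith [h1, hm]
    have h := scalarC (f.A 0 0) (f.A 0 1) (f.A 0 2) (f.b 0) _ (a 0:ℚ) (a 1:ℚ) (a 2:ℚ)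
      hα hp hq hb0 hkeyc ha1 ha2
    have hc : ((((a 0) ^ 2 - 30 * |a 0| : ℤ)) : ℚ) = (a 0:ℚ)^2 - 30*|(a 0:ℚ)| := by
      push_cast
      ring
    rw [hc]
    exact h
  · -- part (d)
    intro h8 h21' h31
    have ha1 : |(a 1 : ℚ)| ≤ 21 := by exact_mod_cast h21'
    have ha2 : |(a 2 : ℚ)| ≤ 8 := by exact_mod_cast h8
    have hkeyc : f.A 0 0*(a 0:ℚ)^2 + 2*(a 0:ℚ)*(f.A 0 1*(a 1:ℚ) + f.A 0 2*(a 2:ℚ))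
        + f.b 0*(a 0:ℚ) ≤ f.eval (fun i => (a i : ℚ)) := by
      have h1 := hminm ![0, a 1, a 2]
      rw [heval] at h1
      rw [heval]
      simp only [Matrix.cons_val_zero, Matrix.cons_val_one, Matrix.head_cons,
        Matrix.cons_val_two, Matrix.tail_cons] at h1
      push_cast at h1
      linarith [h1, hm]
    have h := scalarC (f.A 0 0) (f.A 0 1) (f.A 0 2) (f.b 0) _ (a 0:ℚ) (a 1:ℚ) (a 2:ℚ)
      hα hp hq hb0 hkeyc ha1 ha2
    have h31' : (31:ℚ) ≤ |(a 0:ℚ)| := by exact_mod_cast h31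
    have hfin : (31:ℚ)*f.A 0 0 ≤ f.A 0 0*((a 0:ℚ)^2 - 30*|(a 0:ℚ)|) := by
      have hx : (31:ℚ) ≤ (a 0:ℚ)^2 - 30*|(a 0:ℚ)| := by
        nlinarith [sq_abs ((a 0):ℚ), h31']
      nlinarith [hα, hx]
    linarith [h, hfin]
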